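/- Let R be a Noetherian unique factorization domain and X an R-module with no non-trivial pseudo-null submodule. Then for every element x ∈ X, the annihilator ideal Ann_R(x) = { a ∈ R : a·x = 0 } is a principal ideal of R. Equivalently, every cyclic R-submodule Y of X has principal annihilator ideal Ann_R(Y). -/

import Mathlib

open UniqueFactorizationMonoid in
theorem exists_isRelPrime_mem_aux {R : Type*} [CommRing R] [IsDomain R]
    [UniqueFactorizationMonoid R] (J : Ideal R) (a : R) (ha0 : a ≠ 0)
    (h : ∀ p : R, Prime p → p ∣ a → ∃ c ∈ J, ¬ p ∣ c) :
    ∃ b ∈ J, IsRelPrime a b := by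
  classical
  letI : NormalizationMonoid R := UniqueFactorizationMonoid.normalizationMonoid.toNormalizationMonoid
  set P : Finset R := (normalizedFactors a).toFinset with hP
  have hPprime : ∀ p ∈ P, Prime p := fun p hp =>
    prime_of_normalized_factor p (Multiset.mem_toFinset.1 hp)
  have hPdvd : ∀ p ∈ P, p ∣ a := fun p hp =>
    dvd_of_mem_normalizedFactors (Multiset.mem_toFinset.1 hp)
  have hPnorm : ∀ p ∈ P, normalize p = p := fun p hp =>
    normalize_normalized_factor p (Multiset.mem_toFinset.1 hp)
  have hchoice : ∀ p : R, ∃ c, c ∈ J ∧ (p ∈ P → ¬ p ∣ c) := by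
    intro p
    by_cases hp : p ∈ P
    · obtain ⟨c, hc, hc'⟩ := h p (hPprime p hp) (hPdvd p hp)
      exact ⟨c, hc, fun _ => hc'⟩
    · exact ⟨0, J.zero_mem, fun hq => absurd hq hp⟩
  choose c hcJ hcnd using hchoice
  set b : R := ∑ p ∈ P, c p * ∏ q ∈ P.erase p, q with hb
  have hbJ : b ∈ J := Ideal.sum_mem _ fun p hp => Ideal.mul_mem_right _ _ (hcJ p)
  have hkey : ∀ p ∈ P, ¬ p ∣ b := by
    intro p hp hdvd
    have hprime := hPprime p hp
    have hsum : p ∣ ∑ q ∈ P.erase p, c q * ∏ r ∈ P.erase q, r := by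
      refine Finset.dvd_sum fun q hq => Dvd.dvd.mul_left ?_ _
      exact Finset.dvd_prod_of_mem _
        (Finset.mem_erase.2 ⟨Ne.symm (Finset.mem_erase.1 hq).1, hp⟩)
    rw [hb, ← Finset.add_sum_erase P _ hp] at hdvd
    have hmul : p ∣ c p * ∏ q ∈ P.erase p, q := (dvd_add_left hsum).1 hdvd
    rcases hprime.dvd_mul.1 hmul with hcp | hprod
    · exact hcnd p hp hcp
    · obtain ⟨q, hq, hpq⟩ := (Prime.dvd_finset_prod_iff hprime _).1 hprod
      have hqprime := hPprime q (Finset.mem_of_mem_erase hq)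
      have hassoc : Associated p q :=
        hprime.irreducible.associated_of_dvd hqprime.irreducible hpq
      have : p = q := by
        rw [← hPnorm p hp, ← hPnorm q (Finset.mem_of_mem_erase hq)]
        exact normalize_eq_normalize hassoc.dvd hassoc.symm.dvd
      exact (Finset.mem_erase.1 hq).1 this.symm
  refine ⟨b, hbJ, fun d hda hdb => ?_⟩
  by_contra hdu
  have hd0 : d ≠ 0 := fun e => ha0 (zero_dvd_iff.1 (e ▸ hda))
  obtain ⟨p, hpi, hpd⟩ := WfDvdMonoid.exists_irreducible_factor hdu hd0
  obtain ⟨q, hqmem, hpq⟩ :=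
    exists_mem_normalizedFactors_of_dvd ha0 hpi (hpd.trans hda)
  exact hkey q (Multiset.mem_toFinset.2 hqmem) (hpq.symm.dvd.trans (hpd.trans hdb))

/-- Let `R` be a Noetherian UFD and `X` an `R`-module with no non-trivial
pseudo-null submodule (an `R`-module `N` is pseudo-null if it is annihilated by two relatively
prime elements of `R`). Then the annihilator of every element of `X` is a principal ideal;
equivalently, every cyclic submodule of `X` has principal annihilator. -/
theorem annihilator_isPrincipal_of_no_pseudoNull
    (R : Type*) [CommRing R] [IsDomain R] [IsNoetherianRing R] [UniqueFactorizationMonoid R]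
    (X : Type*) [AddCommGroup X] [Module R X]
    (hX : ∀ N : Submodule R X,
      (∃ a b : R, IsRelPrime a b ∧ (∀ x ∈ N, a • x = 0) ∧ (∀ x ∈ N, b • x = 0)) → N = ⊥) :
    (∀ x : X, (Submodule.span R {x}).annihilator.IsPrincipal) ∧
    (∀ Y : Submodule R X, (∃ x : X, Y = Submodule.span R {x}) →
      Y.annihilator.IsPrincipal) := by
  classical
  letI : NormalizationMonoid R := UniqueFactorizationMonoid.normalizationMonoid.toNormalizationMonoid
  letI : NormalizedGCDMonoid R := UniqueFactorizationMonoid.toNormalizedGCDMonoid R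
  have main : ∀ x : X, (Submodule.span R {x}).annihilator.IsPrincipal := by
    intro x
    set I := (Submodule.span R {x}).annihilator with hI
    have hmemI : ∀ r : R, r ∈ I ↔ r • x = 0 := fun r =>
      Submodule.mem_annihilator_span_singleton x r
    by_cases hbot : I = ⊥
    · exact ⟨0, by rw [hbot, Submodule.span_zero_singleton]⟩
    obtain ⟨s, hs⟩ := (IsNoetherian.noetherian I : I.FG)
    have hsne : s.Nonempty := by
      rcases Finset.eq_empty_or_nonempty s with h | h
      · exfalso; apply hbot; rw [← hs, h]; simp
      · exact h
    set d : R := s.gcd id with hd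
    have hd0 : d ≠ 0 := by
      intro h0
      apply hbot
      rw [← hs]
      have hz : ∀ r ∈ s, r = (0 : R) := fun r hr => by
        simpa using Finset.gcd_eq_zero_iff.1 h0 r hr
      exact le_bot_iff.1 (Submodule.span_le.2 fun r hr => by
        simp [hz r hr])
    obtain ⟨g, hg, hg1⟩ := Finset.extract_gcd (id : R → R) hsne
    simp only [id_eq, ← hd] at hg
    -- hg : ∀ b ∈ s, b = g b * d,  hg1 : s.gcd g = 1
    set y : X := d • x with hy
    set J := (Submodule.span R {y}).annihilator with hJ
    have hmemJ : ∀ r : R, r ∈ J ↔ r • y = 0 := fun r =>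
      Submodule.mem_annihilator_span_singleton y r
    have hgJ : ∀ r ∈ s, g r ∈ J := by
      intro r hr
      rw [hmemJ]
      have hrI : r ∈ I := hs ▸ Ideal.subset_span hr
      have : r • x = 0 := (hmemI r).1 hrI
      rw [hy, ← mul_smul, mul_comm, ← hg r hr]
      exact this
    -- pick a nonzero g r₀
    have hex : ∃ r ∈ s, g r ≠ 0 := by
      by_contra hno
      push_neg at hno
      have : s.gcd g = 0 := Finset.gcd_eq_zero_iff.2 hno
      rw [hg1] at this
      exact one_ne_zero this
    obtain ⟨r₀, hr₀, hg0⟩ := hex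
    have hcond : ∀ p : R, Prime p → p ∣ g r₀ → ∃ c ∈ J, ¬ p ∣ c := by
      intro p hp _
      by_contra hno
      push_neg at hno
      have : p ∣ s.gcd g := Finset.dvd_gcd fun r hr => (hno (g r) (hgJ r hr))
      rw [hg1] at this
      exact hp.not_unit (isUnit_of_dvd_one this)
    obtain ⟨b, hbJ, hab⟩ := exists_isRelPrime_mem_aux J (g r₀) hg0 hcond
    have hybot : Submodule.span R {y} = ⊥ := by
      apply hX
      refine ⟨g r₀, b, hab, ?_, ?_⟩
      · exact fun z hz => Submodule.mem_annihilator.1 (hgJ r₀ hr₀) z hz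
      · exact fun z hz => Submodule.mem_annihilator.1 hbJ z hz
    have hy0 : y = 0 := by
      have : y ∈ Submodule.span R {y} := Submodule.mem_span_singleton_self y
      rw [hybot] at this
      simpa using this
    have hdI : d ∈ I := (hmemI d).2 (hy ▸ hy0)
    refine ⟨⟨d, ?_⟩⟩
    apply le_antisymm
    · rw [← hs]
      refine Ideal.span_le.2 fun r hr => ?_
      rw [SetLike.mem_coe, Ideal.submodule_span_eq, Ideal.mem_span_singleton]
      exact ⟨g r, hg r hr⟩
    · rw [Ideal.submodule_span_eq, Ideal.span_le, Set.singleton_subset_iff]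
      exact hdI
  exact ⟨main, fun Y ⟨x, hY⟩ => hY ▸ main x⟩
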